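/- Fix p > 1 and y > 0. If 1 < q₁ < q₂ and x₁, x₂ ∈ (0,1) satisfy ∫_0^{x₁} (1-t^{q₁})^{-(1+1/q₁-1/p)} dt = y and ∫_0^{x₂} (1-t^{q₂})^{-(1+1/q₂-1/p)} dt = y, then x₁ < x₂. In other words, the function q ↦ tamh_{p,q}(y) is increasing on (1,∞). -/
import Mathlib

open MeasureTheory

lemma tamh_aux_cont (q c x : ℝ) (hq : 0 < q) (hx0 : 0 ≤ x) (hx1 : x < 1) :
    ContinuousOn (fun t : ℝ => (1 - t ^ q) ^ c) (Set.Icc 0 x) := by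
  have hpos : ∀ t ∈ Set.Icc (0:ℝ) x, 0 < 1 - t ^ q := by
    intro t ht
    have h1 : t ^ q ≤ x ^ q := Real.rpow_le_rpow ht.1 ht.2 hq.le
    have h2 : x ^ q < 1 := Real.rpow_lt_one hx0 hx1 hq
    linarith
  have hc : ContinuousOn (fun t : ℝ => 1 - t ^ q) (Set.Icc 0 x) :=
    continuousOn_const.sub (continuousOn_id.rpow_const fun t _ => Or.inr hq.le)
  exact hc.rpow_const fun t ht => Or.inl (ne_of_gt (hpos t ht))

lemma tamh_aux_integrable (q c x : ℝ) (hq : 0 < q) (hx0 : 0 ≤ x) (hx1 : x < 1) :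
    IntervalIntegrable (fun t : ℝ => (1 - t ^ q) ^ c) volume 0 x := by
  have := (tamh_aux_cont q c x hq hx0 hx1)
  rw [← Set.uIcc_of_le hx0] at this
  exact this.intervalIntegrable

theorem tamh_pq_increasing_in_q (p y : ℝ) (hp : 1 < p) (hy : 0 < y)
    (q₁ q₂ x₁ x₂ : ℝ) (hq₁ : 1 < q₁) (hq : q₁ < q₂)
    (hx₁ : x₁ ∈ Set.Ioo (0:ℝ) 1) (hx₂ : x₂ ∈ Set.Ioo (0:ℝ) 1)
    (h₁ : (∫ t in (0:ℝ)..x₁, (1 - t ^ q₁) ^ (-(1 + 1 / q₁ - 1 / p))) = y)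
    (h₂ : (∫ t in (0:ℝ)..x₂, (1 - t ^ q₂) ^ (-(1 + 1 / q₂ - 1 / p))) = y) :
    x₁ < x₂ := by
  by_contra hcon
  push_neg at hcon  -- x₂ ≤ x₁
  obtain ⟨hx₁0, hx₁1⟩ := hx₁
  obtain ⟨hx₂0, hx₂1⟩ := hx₂
  have hq₁0 : 0 < q₁ := lt_trans one_pos hq₁
  have hq₂0 : 0 < q₂ := lt_trans hq₁0 hq
  set a₁ := 1 + 1 / q₁ - 1 / p with ha₁def
  set a₂ := 1 + 1 / q₂ - 1 / p with ha₂def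
  have hp0 : (0:ℝ) < p := lt_trans one_pos hp
  have hpinv : 1 / p < 1 := by rw [div_lt_one hp0]; exact hp
  have ha₂pos : 0 < a₂ := by
    have : 0 < 1 / q₂ := by positivity
    simp only [ha₂def]; linarith
  have ha₂₁ : a₂ < a₁ := by
    have : 1 / q₂ < 1 / q₁ := one_div_lt_one_div_of_lt hq₁0 hq
    simp only [ha₁def, ha₂def]; linarith
  -- integrability
  have hI₁ : IntervalIntegrable (fun t : ℝ => (1 - t ^ q₁) ^ (-a₁)) volume 0 x₂ :=
    tamh_aux_integrable q₁ (-a₁) x₂ hq₁0 hx₂0.le hx₂1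
  have hI₂ : IntervalIntegrable (fun t : ℝ => (1 - t ^ q₂) ^ (-a₂)) volume 0 x₂ :=
    tamh_aux_integrable q₂ (-a₂) x₂ hq₂0 hx₂0.le hx₂1
  -- pointwise strict inequality on (0, x₂)
  have hpt : ∀ t ∈ Set.Ioo (0:ℝ) x₂,
      0 < (1 - t ^ q₁) ^ (-a₁) - (1 - t ^ q₂) ^ (-a₂) := by
    intro t ht
    obtain ⟨ht0, htx⟩ := ht
    have ht1 : t < 1 := lt_trans htx hx₂1
    have hb₁2 : t ^ q₂ < t ^ q₁ := Real.rpow_lt_rpow_of_exponent_gt ht0 ht1 hq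
    have hb₁pos : 0 < 1 - t ^ q₁ := by
      have : t ^ q₁ < 1 := Real.rpow_lt_one ht0.le ht1 hq₁0
      linarith
    have hb₂pos : 0 < 1 - t ^ q₂ := by
      have : t ^ q₂ < 1 := Real.rpow_lt_one ht0.le ht1 hq₂0
      linarith
    have hb₂lt1 : 1 - t ^ q₂ < 1 := by
      have : 0 < t ^ q₂ := Real.rpow_pos_of_pos ht0 q₂
      linarith
    have hb₁lt1 : 1 - t ^ q₁ < 1 := by linarith
    have h1 : (1 - t ^ q₁) ^ a₁ < (1 - t ^ q₁) ^ a₂ :=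
      Real.rpow_lt_rpow_of_exponent_gt hb₁pos hb₁lt1 ha₂₁
    have h2 : (1 - t ^ q₁) ^ a₂ < (1 - t ^ q₂) ^ a₂ :=
      Real.rpow_lt_rpow hb₁pos.le (by linarith) ha₂pos
    have h3 : (1 - t ^ q₁) ^ a₁ < (1 - t ^ q₂) ^ a₂ := lt_trans h1 h2
    have hpos1 : 0 < (1 - t ^ q₁) ^ a₁ := Real.rpow_pos_of_pos hb₁pos a₁
    rw [Real.rpow_neg hb₁pos.le, Real.rpow_neg hb₂pos.le]
    have := inv_strictAnti₀ hpos1 h3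
    linarith
  have hkey : 0 < ∫ t in (0:ℝ)..x₂,
      ((1 - t ^ q₁) ^ (-a₁) - (1 - t ^ q₂) ^ (-a₂)) :=
    intervalIntegral.intervalIntegral_pos_of_pos_on (hI₁.sub hI₂) hpt hx₂0
  rw [intervalIntegral.integral_sub hI₁ hI₂] at hkey
  -- so ∫₀^{x₂} f₂ < ∫₀^{x₂} f₁
  have hlt : y < ∫ t in (0:ℝ)..x₂, (1 - t ^ q₁) ^ (-a₁) := by
    rw [← h₂]; linarith
  -- and ∫₀^{x₂} f₁ ≤ ∫₀^{x₁} f₁ = y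
  have hI₁' : IntervalIntegrable (fun t : ℝ => (1 - t ^ q₁) ^ (-a₁)) volume x₂ x₁ := by
    have h := tamh_aux_integrable q₁ (-a₁) x₁ hq₁0 hx₁0.le hx₁1
    exact h.mono_set (by rw [Set.uIcc_of_le hcon, Set.uIcc_of_le hx₁0.le]; exact Set.Icc_subset_Icc hx₂0.le le_rfl)
  have hnonneg : 0 ≤ ∫ t in x₂..x₁, (1 - t ^ q₁) ^ (-a₁) := by
    apply intervalIntegral.integral_nonneg hcon
    intro u hu
    have hu1 : u < 1 := lt_of_le_of_lt hu.2 hx₁1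
    have hu0 : 0 ≤ u := le_trans hx₂0.le hu.1
    have : u ^ q₁ < 1 := by
      rcases eq_or_lt_of_le hu0 with h | h
      · rw [← h, Real.zero_rpow (ne_of_gt hq₁0)]; norm_num
      · exact Real.rpow_lt_one hu0 hu1 hq₁0
    exact Real.rpow_nonneg (by linarith) _
  have hadd : (∫ t in (0:ℝ)..x₂, (1 - t ^ q₁) ^ (-a₁))
      + (∫ t in x₂..x₁, (1 - t ^ q₁) ^ (-a₁))
      = ∫ t in (0:ℝ)..x₁, (1 - t ^ q₁) ^ (-a₁) :=
    intervalIntegral.integral_add_adjacent_intervals hI₁ hI₁'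
  rw [h₁] at hadd
  linarith
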